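/- arXiv:2408.04080 — 2 statements merged into one kernel-verified Lean document; each statement's English description precedes it below -/
import Mathlib

section
/- Let A be a matrix partitioned into blocks B_{k,l} ∈ ℝ^{m_k × n_l} for k in a finite index set K and l in a finite index set L. Define γ_C = max over k of the number of indices l with B_{k,l} ≠ 0, and γ_R = max over l of the number of indices k with B_{k,l} ≠ 0. Then the spectral norm of A satisfies ‖A‖₂ ≤ √(γ_C) · √(γ_R) · max_{k,l} ‖B_{k,l}‖₂. -/
set_option maxHeartbeats 1000000


open Matrix

/-- The spectral norm (operator norm induced by the Euclidean vector norm) of a real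
matrix. -/
noncomputable def specNorm {m n : Type*} [Fintype m] [Fintype n] [DecidableEq n]
    (A : Matrix m n ℝ) : ℝ :=
  ‖LinearMap.toContinuousLinearMap (Matrix.toEuclideanLin A)‖

lemma tEL_apply {m n : Type*} [Fintype m] [Fintype n] [DecidableEq n]
    (A : Matrix m n ℝ) (x : EuclideanSpace ℝ n) (i : m) :
    (Matrix.toEuclideanLin A x) i = ∑ j, A i j * x j := by
  simp [Matrix.toEuclideanLin, Matrix.toLin'_apply, Matrix.mulVec, dotProduct]

lemma specNorm_bound_apply {m n : Type*} [Fintype m] [Fintype n] [DecidableEq n]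
    (A : Matrix m n ℝ) (x : EuclideanSpace ℝ n) :
    ‖Matrix.toEuclideanLin A x‖ ≤ specNorm A * ‖x‖ := by
  have := (LinearMap.toContinuousLinearMap (Matrix.toEuclideanLin A)).le_opNorm x
  simpa [specNorm] using this

lemma euclid_norm_sq {n : Type*} [Fintype n] (x : EuclideanSpace ℝ n) :
    ‖x‖ ^ 2 = ∑ i, ‖x i‖ ^ 2 := by
  rw [EuclideanSpace.norm_eq, Real.sq_sqrt (by positivity)]

/-- If `A` is partitioned into blocks `B k l ∈ ℝ^{m k × n l}`, and
`γC` (resp. `γR`) is the maximal number of nonzero blocks in a block row (resp. block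
column), then `‖A‖₂ ≤ √γC · √γR · max_{k,l} ‖B k l‖₂`. -/
theorem blockSparse_specNorm_bound
    {K L : Type*} [Fintype K] [Fintype L] [Nonempty K] [Nonempty L]
    [DecidableEq K] [DecidableEq L]
    (m : K → ℕ) (n : L → ℕ)
    (A : Matrix ((k : K) × Fin (m k)) ((l : L) × Fin (n l)) ℝ)
    (B : ∀ k l, Matrix (Fin (m k)) (Fin (n l)) ℝ)
    (hB : ∀ (k : K) (l : L) (i : Fin (m k)) (j : Fin (n l)), B k l i j = A ⟨k, i⟩ ⟨l, j⟩)
    (γC γR : ℕ)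
    (hγC : γC = Finset.univ.sup fun k => (Finset.univ.filter fun l => B k l ≠ 0).card)
    (hγR : γR = Finset.univ.sup fun l => (Finset.univ.filter fun k => B k l ≠ 0).card) :
    specNorm A ≤ Real.sqrt γC * Real.sqrt γR * ⨆ k, ⨆ l, specNorm (B k l) := by
  classical
  set M : ℝ := ⨆ k, ⨆ l, specNorm (B k l) with hM
  have hBnn : ∀ k l, 0 ≤ specNorm (B k l) := fun k l => norm_nonneg _
  have hMnn : 0 ≤ M := Real.iSup_nonneg fun k => Real.iSup_nonneg fun l => hBnn k l
  have hBM : ∀ k l, specNorm (B k l) ≤ M := by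
    intro k l
    refine le_trans (le_ciSup (f := fun l => specNorm (B k l))
      (Set.Finite.bddAbove (Set.finite_range _)) l) ?_
    exact le_ciSup (f := fun k => ⨆ l, specNorm (B k l))
      (Set.Finite.bddAbove (Set.finite_range _)) k
  set S : K → Finset L := fun k => Finset.univ.filter fun l => B k l ≠ 0 with hS
  set T : L → Finset K := fun l => Finset.univ.filter fun k => B k l ≠ 0 with hT
  have hSc : ∀ k, (S k).card ≤ γC := by
    intro k
    rw [hγC]
    exact Finset.le_sup (f := fun k => (Finset.univ.filter fun l => B k l ≠ 0).card)
      (Finset.mem_univ k)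
  have hTc : ∀ l, (T l).card ≤ γR := by
    intro l
    rw [hγR]
    exact Finset.le_sup (f := fun l => (Finset.univ.filter fun k => B k l ≠ 0).card)
      (Finset.mem_univ l)
  have hC : (0:ℝ) ≤ Real.sqrt γC * Real.sqrt γR * M := by positivity
  refine ContinuousLinearMap.opNorm_le_bound _ hC ?_
  intro x
  simp only [LinearMap.coe_toContinuousLinearMap']
  set xb : ∀ l, EuclideanSpace ℝ (Fin (n l)) := fun l => WithLp.toLp 2 (fun j => x ⟨l, j⟩) with hxb
  have hxsum : ‖x‖ ^ 2 = ∑ l, ‖xb l‖ ^ 2 := by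
    rw [euclid_norm_sq]
    rw [← Finset.univ_sigma_univ, Finset.sum_sigma]
    refine Finset.sum_congr rfl fun l _ => ?_
    rw [euclid_norm_sq]
  set y : EuclideanSpace ℝ ((k : K) × Fin (m k)) := Matrix.toEuclideanLin A x with hy
  set yb : ∀ k, EuclideanSpace ℝ (Fin (m k)) := fun k => WithLp.toLp 2 (fun i => y ⟨k, i⟩) with hyb
  have hysum : ‖y‖ ^ 2 = ∑ k, ‖yb k‖ ^ 2 := by
    rw [euclid_norm_sq]
    rw [← Finset.univ_sigma_univ, Finset.sum_sigma]
    refine Finset.sum_congr rfl fun k _ => ?_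
    rw [euclid_norm_sq]
  -- each block row of y is a sum of block applications
  have hyk : ∀ k, yb k = ∑ l ∈ S k, Matrix.toEuclideanLin (B k l) (xb l) := by
    intro k
    have : yb k = ∑ l, Matrix.toEuclideanLin (B k l) (xb l) := by
      ext i
      have hy1 : yb k i = ∑ j, A ⟨k, i⟩ j * x j := tEL_apply A x ⟨k, i⟩
      have h2 : (∑ l, Matrix.toEuclideanLin (B k l) (xb l)) i
          = ∑ l, (Matrix.toEuclideanLin (B k l) (xb l)) i := by
        simp [WithLp.ofLp_sum]
      rw [hy1, h2, ← Finset.univ_sigma_univ, Finset.sum_sigma]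
      refine Finset.sum_congr rfl fun l _ => ?_
      rw [tEL_apply]
      refine Finset.sum_congr rfl fun j _ => ?_
      rw [hB k l i j]
    rw [this]
    symm
    refine Finset.sum_subset (Finset.subset_univ _) ?_
    intro l _ hl
    have : B k l = 0 := by
      by_contra h
      exact hl (Finset.mem_filter.2 ⟨Finset.mem_univ _, h⟩)
    simp [this]
  have hyknorm : ∀ k, ‖yb k‖ ≤ ∑ l ∈ S k, M * ‖xb l‖ := by
    intro k
    rw [hyk k]
    refine le_trans (norm_sum_le _ _) (Finset.sum_le_sum fun l _ => ?_)
    exact le_trans (specNorm_bound_apply _ _)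
      (mul_le_mul_of_nonneg_right (hBM k l) (norm_nonneg _))
  -- square bound per block row
  have hyksq : ∀ k, ‖yb k‖ ^ 2 ≤ (γC : ℝ) * ∑ l ∈ S k, M ^ 2 * ‖xb l‖ ^ 2 := by
    intro k
    have h1 : ‖yb k‖ ^ 2 ≤ (∑ l ∈ S k, M * ‖xb l‖) ^ 2 := by
      have := hyknorm k
      have hnn : (0:ℝ) ≤ ‖yb k‖ := norm_nonneg _
      nlinarith
    refine h1.trans ?_
    refine (sq_sum_le_card_mul_sum_sq).trans ?_
    have h2 : ∑ l ∈ S k, (M * ‖xb l‖) ^ 2 = ∑ l ∈ S k, M ^ 2 * ‖xb l‖ ^ 2 := by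
      refine Finset.sum_congr rfl fun l _ => by ring
    rw [h2]
    have h3 : ((S k).card : ℝ) ≤ (γC : ℝ) := Nat.cast_le.mpr (hSc k)
    exact mul_le_mul_of_nonneg_right h3
      (Finset.sum_nonneg fun l _ => by positivity)
  -- sum over k, then swap
  have hswap : ∑ k, ∑ l ∈ S k, M ^ 2 * ‖xb l‖ ^ 2
      ≤ (γR : ℝ) * ∑ l, M ^ 2 * ‖xb l‖ ^ 2 := by
    have h1 : ∑ k, ∑ l ∈ S k, M ^ 2 * ‖xb l‖ ^ 2
        = ∑ l, ((T l).card : ℝ) * (M ^ 2 * ‖xb l‖ ^ 2) := by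
      simp only [hS, Finset.sum_filter]
      rw [Finset.sum_comm]
      refine Finset.sum_congr rfl fun l _ => ?_
      rw [← Finset.sum_filter]
      rw [Finset.sum_const, nsmul_eq_mul]
    rw [h1, Finset.mul_sum]
    refine Finset.sum_le_sum fun l _ => ?_
    refine mul_le_mul_of_nonneg_right ?_ (by positivity)
    exact_mod_cast hTc l
  have hfinal : ‖y‖ ^ 2 ≤ (γC : ℝ) * (γR : ℝ) * M ^ 2 * ‖x‖ ^ 2 := by
    rw [hysum]
    calc ∑ k, ‖yb k‖ ^ 2 ≤ ∑ k, (γC : ℝ) * ∑ l ∈ S k, M ^ 2 * ‖xb l‖ ^ 2 :=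
          Finset.sum_le_sum fun k _ => hyksq k
      _ = (γC : ℝ) * ∑ k, ∑ l ∈ S k, M ^ 2 * ‖xb l‖ ^ 2 := by rw [Finset.mul_sum]
      _ ≤ (γC : ℝ) * ((γR : ℝ) * ∑ l, M ^ 2 * ‖xb l‖ ^ 2) := by
          refine mul_le_mul_of_nonneg_left hswap (by positivity)
      _ = (γC : ℝ) * (γR : ℝ) * M ^ 2 * ‖x‖ ^ 2 := by
          rw [hxsum]
          rw [Finset.mul_sum, Finset.mul_sum, Finset.mul_sum]
          exact Finset.sum_congr rfl fun l _ => by ring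
  have hRHSnn : (0:ℝ) ≤ Real.sqrt γC * Real.sqrt γR * M * ‖x‖ := by positivity
  have hsq : (Real.sqrt γC * Real.sqrt γR * M * ‖x‖) ^ 2
      = (γC : ℝ) * (γR : ℝ) * M ^ 2 * ‖x‖ ^ 2 := by
    have h1 : Real.sqrt γC ^ 2 = (γC : ℝ) := Real.sq_sqrt (by positivity)
    have h2 : Real.sqrt γR ^ 2 = (γR : ℝ) := Real.sq_sqrt (by positivity)
    rw [mul_pow, mul_pow, mul_pow, h1, h2]
  calc ‖y‖ = Real.sqrt (‖y‖ ^ 2) := (Real.sqrt_sq (norm_nonneg y)).symm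
    _ ≤ Real.sqrt ((Real.sqrt γC * Real.sqrt γR * M * ‖x‖) ^ 2) :=
        Real.sqrt_le_sqrt (hfinal.trans_eq hsq.symm)
    _ = Real.sqrt γC * Real.sqrt γR * M * ‖x‖ := Real.sqrt_sq hRHSnn
end

section
/- There exists an absolute constant C > 0 such that for every integer p ≥ 2 the following holds. Let τ_β = cos(π(2β+1)/(2p)) for β = 0, …, p−1 be the Chebyshev nodes on [−1,1], and let L_β be the corresponding Lagrange basis polynomials of degree p−1 (so L_β(τ_{β'}) = δ_{β,β'}). Then for every f ∈ ℝ^p, ∫_{−1}^{1} (Σ_{β=0}^{p−1} f_β L_β(t))² dt ≤ C · p · log(p) · ‖f‖₂². -/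
open scoped BigOperators

/-- The Chebyshev nodes `τ_β = cos(π(2β+1)/(2p))` on `[-1,1]`. -/
noncomputable def chebNode (p : ℕ) (β : Fin p) : ℝ :=
  Real.cos (Real.pi * (2 * ((β : ℕ) : ℝ) + 1) / (2 * (p : ℝ)))

/-- The Lagrange basis polynomial `L_β(t) = Π_{β'≠β} (t − τ_{β'})/(τ_β − τ_{β'})`
for the Chebyshev nodes. -/
noncomputable def chebLagrange (p : ℕ) (β : Fin p) (t : ℝ) : ℝ :=
  ∏ β' ∈ Finset.univ.filter fun β' => β' ≠ β,
    (t - chebNode p β') / (chebNode p β - chebNode p β')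

open Polynomial Real Polynomial.Chebyshev

lemma T_deg_coeff : ∀ n : ℕ, (T ℝ (n:ℤ)).natDegree ≤ n ∧ (T ℝ (n:ℤ)).coeff n = 2^(n-1) := by
  intro n
  induction n using Nat.strong_induction_on with
  | _ n ih =>
    match n with
    | 0 => simp [T_zero]
    | 1 => simp [T_one]
    | (n+2) =>
      obtain ⟨h1d, h1c⟩ := ih (n+1) (by omega)
      obtain ⟨h0d, h0c⟩ := ih n (by omega)
      have key : T ℝ ((n:ℤ)+2) = 2 * X * T ℝ ((n:ℤ)+1) - T ℝ (n:ℤ) := T_add_two ℝ n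
      have hcast : ((n+2 : ℕ) : ℤ) = (n:ℤ)+2 := by push_cast; ring
      have hcast1 : ((n+1 : ℕ) : ℤ) = (n:ℤ)+1 := by push_cast; ring
      rw [hcast, key]
      constructor
      · refine (natDegree_sub_le _ _).trans ?_
        have h2X : natDegree ((2:ℝ[X]) * X) ≤ 1 := by
          refine (natDegree_mul_le).trans ?_
          simp
        have := (natDegree_mul_le (p := (2:ℝ[X]) * X) (q := T ℝ ((n:ℤ)+1)))
        rw [← hcast1] at this ⊢
        omega
      · have e1 : ((2:ℝ[X]) * X * T ℝ ((n:ℤ)+1)).coeff (n+2) = 2 * (T ℝ ((n:ℤ)+1)).coeff (n+1) := by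
          have : (2:ℝ[X]) * X * T ℝ ((n:ℤ)+1) = C 2 * (X * T ℝ ((n:ℤ)+1)) := by
            rw [← mul_assoc]
            congr 1
          rw [this, coeff_C_mul, coeff_X_mul]
        have e2 : (T ℝ (n:ℤ)).coeff (n+2) = 0 :=
          coeff_eq_zero_of_natDegree_lt (by omega)
        rw [coeff_sub, e1, e2, ← hcast1, h1c]
        simp [pow_succ]
        ring

lemma T_natDeg (p : ℕ) : (T ℝ (p:ℤ)).natDegree = p :=
  le_antisymm (T_deg_coeff p).1 (le_natDegree_of_ne_zero (by rw [(T_deg_coeff p).2]; positivity))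

lemma T_leadCoeff (p : ℕ) : (T ℝ (p:ℤ)).leadingCoeff = 2^(p-1) := by
  rw [leadingCoeff, T_natDeg, (T_deg_coeff p).2]

-- angle
noncomputable def chebAngle (p : ℕ) (β : Fin p) : ℝ := Real.pi * (2 * ((β : ℕ) : ℝ) + 1) / (2 * (p : ℝ))

lemma chebNode_eq (p : ℕ) (β : Fin p) : chebNode p β = Real.cos (chebAngle p β) := rfl

lemma chebAngle_mem (p : ℕ) (hp : 0 < p) (β : Fin p) : chebAngle p β ∈ Set.Ioo 0 Real.pi := by
  have hβ : ((β : ℕ) : ℝ) ≤ (p : ℝ) - 1 := by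
    have h := β.2
    have : ((β:ℕ):ℝ) + 1 ≤ (p:ℝ) := by exact_mod_cast Nat.succ_le_of_lt h
    linarith
  have hp' : (0:ℝ) < p := by exact_mod_cast hp
  unfold chebAngle
  constructor
  · apply div_pos ?_ (by positivity)
    have : (0:ℝ) ≤ ((β:ℕ):ℝ) := Nat.cast_nonneg _
    nlinarith [Real.pi_pos]
  · rw [div_lt_iff₀ (by positivity)]
    nlinarith [Real.pi_pos]

lemma chebAngle_strictMono (p : ℕ) : StrictMono fun β : Fin p => chebAngle p β := by
  intro a b hab
  unfold chebAngle
  have hp : (0:ℝ) < p := by exact_mod_cast a.pos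
  have hab' : ((a:ℕ):ℝ) < ((b:ℕ):ℝ) := by exact_mod_cast hab
  simp only
  apply div_lt_div_of_pos_right ?_ (by positivity)
  nlinarith [Real.pi_pos]

lemma chebNode_strictAnti (p : ℕ) (hp : 0 < p) : StrictAnti fun β : Fin p => chebNode p β := by
  intro a b hab
  simp only [chebNode_eq]
  exact Real.cos_lt_cos_of_nonneg_of_le_pi (le_of_lt (chebAngle_mem p hp a).1)
    (le_of_lt (chebAngle_mem p hp b).2) (chebAngle_strictMono p hab)

lemma chebNode_inj (p : ℕ) (hp : 0 < p) : Function.Injective (chebNode p) :=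
  (chebNode_strictAnti p hp).injective

lemma T_root (p : ℕ) (hp : 0 < p) (β : Fin p) : (T ℝ (p:ℤ)).eval (chebNode p β) = 0 := by
  rw [chebNode_eq, T_real_cos]
  have hp' : (0:ℝ) < p := by exact_mod_cast hp
  have : ((p:ℤ):ℝ) * chebAngle p β = (2 * (β:ℕ) + 1) * Real.pi / 2 := by
    unfold chebAngle
    push_cast
    field_simp
  rw [this]
  rw [Real.cos_eq_zero_iff]
  exact ⟨(β:ℕ), by push_cast; ring⟩

lemma sin_p_angle (p : ℕ) (hp : 0 < p) (β : Fin p) :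
    Real.sin (((p:ℤ):ℝ) * chebAngle p β) = (-1)^(β:ℕ) := by
  have hp' : (0:ℝ) < p := by exact_mod_cast hp
  have : ((p:ℤ):ℝ) * chebAngle p β = (β:ℕ) * Real.pi + Real.pi/2 := by
    unfold chebAngle; push_cast; field_simp
  have hc : Real.cos (((β:ℕ):ℝ) * Real.pi) = (-1)^(β:ℕ) := by
    simpa using Real.cos_nat_mul_pi_sub 0 (β:ℕ)
  rw [this, Real.sin_add, Real.sin_nat_mul_pi, Real.sin_pi_div_two, Real.cos_pi_div_two, hc]
  ring

lemma T_factor (p : ℕ) (hp : 0 < p) :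
    T ℝ (p:ℤ) = C ((2:ℝ)^(p-1)) * Lagrange.nodal Finset.univ (chebNode p) := by
  classical
  set N := Lagrange.nodal Finset.univ (chebNode p) with hN
  have hdvd : N ∣ T ℝ (p:ℤ) := by
    rw [hN, Lagrange.nodal_eq]
    refine Finset.prod_dvd_of_coprime ?_ ?_
    · intro a _ b _ hab
      exact Polynomial.pairwise_coprime_X_sub_C (chebNode_inj p hp) hab
    · intro a _
      rw [dvd_iff_isRoot]
      exact T_root p hp a
  obtain ⟨q, hq⟩ := hdvd
  have hT0 : T ℝ (p:ℤ) ≠ 0 := by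
    intro h
    have := T_leadCoeff p
    rw [h, leadingCoeff_zero] at this
    exact absurd this.symm (by positivity)
  have hq0 : q ≠ 0 := by rintro rfl; simp at hq; exact hT0 hq
  have hNdeg : N.natDegree = p := by
    rw [hN, Lagrange.natDegree_nodal]; simp
  have hdeg : q.natDegree = 0 := by
    have := congrArg natDegree hq
    rw [T_natDeg, natDegree_mul (Lagrange.nodal_ne_zero) hq0, hNdeg] at this
    omega
  obtain ⟨c, rfl⟩ : ∃ c, q = C c := ⟨q.coeff 0, eq_C_of_natDegree_eq_zero hdeg⟩
  have hlc := congrArg leadingCoeff hq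
  rw [T_leadCoeff, leadingCoeff_mul, leadingCoeff_C, (Lagrange.nodal_monic).leadingCoeff, one_mul] at hlc
  rw [hq, ← hlc, mul_comm]

lemma cheb_D_eq (p : ℕ) (hp : 0 < p) (β : Fin p) :
    (2:ℝ)^(p-1) * (∏ β' ∈ Finset.univ.erase β, (chebNode p β - chebNode p β'))
      * Real.sin (chebAngle p β) = (p:ℝ) * (-1)^(β:ℕ) := by
  classical
  have hder := congrArg derivative (T_factor p hp)
  rw [T_derivative_eq_U, derivative_mul, derivative_C, zero_mul, zero_add] at hder
  have heval := congrArg (Polynomial.eval (chebNode p β)) hder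
  rw [eval_mul, eval_mul, eval_C, eval_intCast,
    Lagrange.eval_nodal_derivative_eval_node_eq (Finset.mem_univ β),
    Lagrange.eval_nodal] at heval
  -- heval : p * eval (chebNode p β) (U ℝ (p-1)) = 2^(p-1) * ∏ ...
  have hU := Polynomial.Chebyshev.U_real_cos (chebAngle p β) ((p:ℤ) - 1)
  rw [show ((((p:ℤ) - 1 : ℤ)):ℝ) + 1 = ((p:ℤ):ℝ) by push_cast; ring] at hU
  rw [← chebNode_eq] at hU
  have hsin := sin_p_angle p hp β
  rw [show (2:ℝ)^(p-1) * (∏ β' ∈ Finset.univ.erase β, (chebNode p β - chebNode p β'))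
      = ((p:ℤ):ℝ) * (U ℝ ((p:ℤ)-1)).eval (chebNode p β) from heval.symm,
    mul_assoc, hU, hsin]
  push_cast; ring

lemma sin_angle_pos (p : ℕ) (hp : 0 < p) (β : Fin p) : 0 < Real.sin (chebAngle p β) :=
  Real.sin_pos_of_pos_of_lt_pi (chebAngle_mem p hp β).1 (chebAngle_mem p hp β).2

lemma one_le_p_sin (p : ℕ) (hp : 0 < p) (β : Fin p) :
    1 ≤ (p:ℝ) * Real.sin (chebAngle p β) := by
  have hp' : (0:ℝ) < p := by exact_mod_cast hp
  have hβ : ((β:ℕ):ℝ) + 1 ≤ (p:ℝ) := by exact_mod_cast Nat.succ_le_of_lt β.2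
  have hβ0 : (0:ℝ) ≤ ((β:ℕ):ℝ) := Nat.cast_nonneg _
  have hmin : Real.pi / (2*p) ≤ chebAngle p β ∧ chebAngle p β ≤ Real.pi - Real.pi / (2*p) := by
    unfold chebAngle
    constructor
    · rw [div_le_div_iff₀ (by positivity) (by positivity)]
      nlinarith [Real.pi_pos, mul_nonneg (mul_nonneg Real.pi_pos.le hβ0) hp'.le]
    · have he : Real.pi - Real.pi/(2*(p:ℝ)) = Real.pi * (2*(p:ℝ) - 1)/(2*(p:ℝ)) := by
        field_simp
      rw [he, div_le_div_iff₀ (by positivity) (by positivity)]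
      nlinarith [Real.pi_pos, mul_pos Real.pi_pos hp']
  rcases le_or_gt (chebAngle p β) (Real.pi/2) with h | h
  · have := Real.mul_le_sin (x := chebAngle p β) (le_of_lt ((chebAngle_mem p hp β).1)) h
    have h1 : 2 / Real.pi * (Real.pi / (2*p)) ≤ 2 / Real.pi * chebAngle p β := by
      apply mul_le_mul_of_nonneg_left hmin.1 (by positivity)
    have h2 : 2 / Real.pi * (Real.pi / (2*p)) = 1 / p := by
      field_simp
    rw [h2] at h1
    have : 1/(p:ℝ) ≤ Real.sin (chebAngle p β) := le_trans h1 this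
    calc (1:ℝ) = p * (1/p) := by field_simp
      _ ≤ p * Real.sin (chebAngle p β) := by nlinarith
  · have hx : Real.pi - chebAngle p β ≤ Real.pi / 2 := by linarith
    have hx0 : 0 ≤ Real.pi - chebAngle p β := by
      have := (chebAngle_mem p hp β).2; linarith
    have := Real.mul_le_sin hx0 hx
    rw [Real.sin_pi_sub] at this
    have h1 : 2 / Real.pi * (Real.pi / (2*p)) ≤ 2 / Real.pi * (Real.pi - chebAngle p β) := by
      apply mul_le_mul_of_nonneg_left (by linarith [hmin.2]) (by positivity)
    have h2 : 2 / Real.pi * (Real.pi / (2*p)) = 1 / p := by field_simp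
    rw [h2] at h1
    have : 1/(p:ℝ) ≤ Real.sin (chebAngle p β) := le_trans h1 this
    calc (1:ℝ) = p * (1/p) := by field_simp
      _ ≤ p * Real.sin (chebAngle p β) := by nlinarith

lemma abs_T_eval_le (n : ℤ) (x : ℝ) (hx : x ∈ Set.Icc (-1:ℝ) 1) : |(T ℝ n).eval x| ≤ 1 := by
  have : x = Real.cos (Real.arccos x) := (Real.cos_arccos hx.1 hx.2).symm
  rw [this, T_real_cos]
  exact Real.abs_cos_le_one _

lemma abs_U_eval_le (n : ℕ) (x : ℝ) (hx : x ∈ Set.Icc (-1:ℝ) 1) :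
    |(U ℝ (n:ℤ)).eval x| ≤ (n:ℝ) + 1 := by
  induction n with
  | zero => simp [U_zero]
  | succ n ih =>
    have h := U_eq_X_mul_U_add_T ℝ (n:ℤ)
    have hc : ((n+1 : ℕ):ℤ) = (n:ℤ)+1 := by push_cast; ring
    rw [hc, h]
    have hx1 : |x| ≤ 1 := abs_le.mpr ⟨hx.1, hx.2⟩
    rw [eval_add, eval_mul, eval_X]
    refine (abs_add_le _ _).trans ?_
    rw [abs_mul]
    have hT := abs_T_eval_le ((n:ℤ)+1) x hx
    push_cast
    nlinarith [abs_nonneg ((U ℝ (n:ℤ)).eval x)]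

lemma T_mvt (p : ℕ) (hp : 0 < p) (y : ℝ) (hy : y ∈ Set.Icc (-1:ℝ) 1)
    (x : ℝ) (hx : x ∈ Set.Icc (-1:ℝ) 1) :
    |(T ℝ (p:ℤ)).eval y - (T ℝ (p:ℤ)).eval x| ≤ (p:ℝ)^2 * |y - x| := by
  have hder : ∀ z ∈ Set.Icc (-1:ℝ) 1,
      HasDerivWithinAt (fun t => (T ℝ (p:ℤ)).eval t)
        ((derivative (T ℝ (p:ℤ))).eval z) (Set.Icc (-1:ℝ) 1) z :=
    fun z _ => (Polynomial.hasDerivAt _ z).hasDerivWithinAt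
  have hbound : ∀ z ∈ Set.Icc (-1:ℝ) 1, ‖(derivative (T ℝ (p:ℤ))).eval z‖ ≤ (p:ℝ)^2 := by
    intro z hz
    rw [T_derivative_eq_U, eval_mul, eval_intCast]
    rw [Real.norm_eq_abs, abs_mul]
    have hU : |(U ℝ ((p:ℤ)-1)).eval z| ≤ (p:ℝ) := by
      obtain ⟨m, rfl⟩ : ∃ m : ℕ, p = m + 1 := ⟨p - 1, (Nat.succ_pred_eq_of_pos hp).symm⟩
      have := abs_U_eval_le m z hz
      rw [show ((m+1:ℕ):ℤ) - 1 = (m:ℤ) by push_cast; ring]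
      push_cast
      linarith
    have : |(((p:ℤ):ℝ))| = (p:ℝ) := by
      rw [abs_of_nonneg]; push_cast; ring; positivity
    rw [this]
    nlinarith [abs_nonneg ((U ℝ ((p:ℤ)-1)).eval z), Nat.cast_nonneg (α := ℝ) p]
  have := Convex.norm_image_sub_le_of_norm_hasDerivWithin_le hder hbound (convex_Icc _ _) hx hy
  simpa [Real.norm_eq_abs] using this

lemma chebNode_mem (p : ℕ) (β : Fin p) : chebNode p β ∈ Set.Icc (-1:ℝ) 1 :=
  ⟨Real.neg_one_le_cos _, Real.cos_le_one _⟩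

lemma L_pointwise (p : ℕ) (hp : 0 < p) (β : Fin p) (t : ℝ) (ht : t ∈ Set.Icc (-1:ℝ) 1) :
    (chebLagrange p β t)^2 ≤
      2 * (Real.sin (chebAngle p β))^2 * (p:ℝ)^2 / (1 + (p:ℝ)^4 * (t - chebNode p β)^2) := by
  classical
  set s := Real.sin (chebAngle p β) with hs_def
  set τ := chebNode p with hτ_def
  set Dv := ∏ β' ∈ Finset.univ.erase β, (τ β - τ β') with hDv_def
  have hs : 0 < s := sin_angle_pos p hp β
  have hp' : (0:ℝ) < p := by exact_mod_cast hp
  have hE : (2:ℝ)^(p-1) * Dv * s = (p:ℝ) * (-1)^(β:ℕ) := cheb_D_eq p hp β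
  have hE2 : ((2:ℝ)^(p-1))^2 * Dv^2 * s^2 = (p:ℝ)^2 := by
    have h := congrArg (·^2) hE
    have hε : ((-1:ℝ)^(β:ℕ))^2 = 1 := by
      rw [← pow_mul, mul_comm, pow_mul]; norm_num
    nlinarith [h]
  have hDv0 : Dv ≠ 0 := by
    intro h
    rw [h, mul_zero, zero_mul] at hE
    have hne : (p:ℝ) * (-1)^(β:ℕ) ≠ 0 :=
      mul_ne_zero hp'.ne' (pow_ne_zero _ (by norm_num))
    exact hne hE.symm
  have hfilter : (Finset.univ.filter fun β' => β' ≠ β) = Finset.univ.erase β :=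
    Finset.filter_ne' _ _
  have hL : chebLagrange p β t
      = (∏ β' ∈ Finset.univ.erase β, (t - τ β')) / Dv := by
    unfold chebLagrange
    rw [hfilter, Finset.prod_div_distrib]
  have hprod : (T ℝ (p:ℤ)).eval t = 2^(p-1) * ∏ β' : Fin p, (t - τ β') := by
    rw [T_factor p hp]
    simp [Lagrange.eval_nodal]; rfl
  by_cases htτ : t = τ β
  · have hLone : chebLagrange p β t = 1 := by
      unfold chebLagrange
      refine Finset.prod_eq_one fun β' hβ' => ?_
      rw [htτ]
      refine div_self (sub_ne_zero.mpr fun h => ?_)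
      exact (Finset.mem_filter.mp hβ').2 (chebNode_inj p hp h.symm)
    rw [hLone, htτ]
    have hps := one_le_p_sin p hp β
    rw [sub_self]
    have : (0:ℝ) < 1 + (p:ℝ)^4 * 0^2 := by norm_num
    rw [le_div_iff₀ this]
    nlinarith [hps]
  · set u := t - τ β with hu_def
    have hu0 : u ≠ 0 := sub_ne_zero.mpr htτ
    set P := ∏ β' ∈ Finset.univ.erase β, (t - τ β') with hP_def
    set Tt := (T ℝ (p:ℤ)).eval t with hTt_def
    have hsplit : u * P = ∏ β' : Fin p, (t - τ β') := by
      rw [hu_def, hP_def]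
      exact Finset.mul_prod_erase Finset.univ (fun β' => t - τ β') (Finset.mem_univ β)
    have h1 : Tt = 2^(p-1) * (u * P) := by rw [hprod, hsplit]
    have hkey : P^2 * ((p:ℝ)^2 * u^2) = Tt^2 * s^2 * Dv^2 := by
      rw [h1, ← hE2]; ring
    have hLsq : (chebLagrange p β t)^2 = Tt^2 * s^2 / ((p:ℝ)^2 * u^2) := by
      rw [hL, div_pow, div_eq_div_iff (by positivity) (by positivity)]
      linarith [hkey]
    rw [hLsq]
    have hT1 : Tt^2 ≤ 1 := by
      have := abs_T_eval_le (p:ℤ) t ht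
      nlinarith [this, abs_nonneg Tt, sq_abs Tt]
    have hT2 : Tt^2 ≤ (p:ℝ)^4 * u^2 := by
      have hmvt := T_mvt p hp t ht (τ β) (chebNode_mem p β)
      rw [T_root p hp β, sub_zero] at hmvt
      have habs : |Tt| ≤ (p:ℝ)^2 * |u| := hmvt
      have h2 : Tt^2 ≤ ((p:ℝ)^2 * |u|)^2 := by
        rw [← sq_abs Tt]
        exact pow_le_pow_left₀ (abs_nonneg Tt) habs 2
      calc Tt^2 ≤ ((p:ℝ)^2 * |u|)^2 := h2
        _ = (p:ℝ)^4 * u^2 := by rw [mul_pow, sq_abs]; ring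
    rw [div_le_div_iff₀ (by positivity) (by positivity)]
    have hh1 : Tt^2 * s^2 ≤ (p:ℝ)^4 * u^2 * s^2 :=
      mul_le_mul_of_nonneg_right hT2 (sq_nonneg s)
    have hh2 : Tt^2 * s^2 * ((p:ℝ)^4 * u^2) ≤ 1 * s^2 * ((p:ℝ)^4 * u^2) := by
      have := mul_le_mul_of_nonneg_right hT1 (by positivity : (0:ℝ) ≤ s^2 * ((p:ℝ)^4 * u^2))
      nlinarith [this]
    linarith [hh1, hh2]

lemma chebLagrange_continuous (p : ℕ) (β : Fin p) : Continuous (chebLagrange p β) := by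
  unfold chebLagrange
  exact continuous_finset_prod _ fun β' _ =>
    ((continuous_id.sub continuous_const).div_const _)

lemma L_int_bound (p : ℕ) (hp : 0 < p) (β : Fin p) :
    (∫ t in (-1:ℝ)..1, (chebLagrange p β t)^2) ≤ 2 * Real.pi := by
  set s := Real.sin (chebAngle p β) with hs_def
  set τ := chebNode p β with hτ_def
  have hs : 0 < s := sin_angle_pos p hp β
  have hs1 : s ≤ 1 := Real.sin_le_one _
  have hp' : (0:ℝ) < p := by exact_mod_cast hp
  have hg : ∀ t : ℝ, 2 * s^2 * (p:ℝ)^2 / (1 + (p:ℝ)^4 * (t - τ)^2)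
      = (2 * s^2 * (p:ℝ)^2) * (1 + ((p:ℝ)^2 * t - (p:ℝ)^2 * τ)^2)⁻¹ := by
    intro t
    rw [div_eq_mul_inv]
    congr 2
    ring
  have hcont : Continuous fun t : ℝ => (2 * s^2 * (p:ℝ)^2) * (1 + ((p:ℝ)^2*t - (p:ℝ)^2*τ)^2)⁻¹ := by
    apply Continuous.mul continuous_const
    apply Continuous.inv₀
    · continuity
    · intro x; positivity
  have hmono : (∫ t in (-1:ℝ)..1, (chebLagrange p β t)^2)
      ≤ ∫ t in (-1:ℝ)..1, (2 * s^2 * (p:ℝ)^2) * (1 + ((p:ℝ)^2*t - (p:ℝ)^2*τ)^2)⁻¹ := by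
    apply intervalIntegral.integral_mono_on (by norm_num)
    · exact ((chebLagrange_continuous p β).pow 2).intervalIntegrable _ _
    · exact hcont.intervalIntegrable _ _
    · intro x hx
      have := L_pointwise p hp β x hx
      rw [hg x] at this
      exact this
  refine hmono.trans ?_
  rw [intervalIntegral.integral_const_mul]
  have hcomp : (∫ t in (-1:ℝ)..1, (1 + ((p:ℝ)^2*t - (p:ℝ)^2*τ)^2)⁻¹)
      = ((p:ℝ)^2)⁻¹ • ∫ x in ((p:ℝ)^2*(-1) - (p:ℝ)^2*τ)..((p:ℝ)^2*1 - (p:ℝ)^2*τ), (1 + x^2)⁻¹ := by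
    exact intervalIntegral.integral_comp_mul_sub (fun x => (1 + x^2)⁻¹) (by positivity) _
  rw [hcomp, integral_inv_one_add_sq, smul_eq_mul]
  set A := Real.arctan ((p:ℝ)^2*1 - (p:ℝ)^2*τ) - Real.arctan ((p:ℝ)^2*(-1) - (p:ℝ)^2*τ) with hA_def
  have harc : A ≤ Real.pi := by
    have h1 := Real.arctan_lt_pi_div_two ((p:ℝ)^2*1 - (p:ℝ)^2*τ)
    have h2 := Real.neg_pi_div_two_lt_arctan ((p:ℝ)^2*(-1) - (p:ℝ)^2*τ)
    rw [hA_def]; linarith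
  have harc0 : 0 ≤ A := by
    have hle : ((p:ℝ)^2*(-1) - (p:ℝ)^2*τ) ≤ ((p:ℝ)^2*1 - (p:ℝ)^2*τ) := by nlinarith
    have := Real.arctan_strictMono.monotone hle
    rw [hA_def]; linarith
  have heq : 2*s^2*(p:ℝ)^2*(((p:ℝ)^2)⁻¹*A) = 2*s^2*A := by
    field_simp
  rw [heq]
  have hs2 : s^2 ≤ 1 := by nlinarith
  have h3 : 2*s^2*A ≤ 2*s^2*Real.pi := by nlinarith
  have h4 : 2*s^2*Real.pi ≤ 2*Real.pi := by nlinarith [Real.pi_pos]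
  linarith

/-- There is an absolute constant `C > 0` such that for all `p ≥ 2`
and all `f ∈ ℝ^p`, the Chebyshev–Lagrange interpolant satisfies
`∫_{−1}^{1} (Σ_β f_β L_β(t))² dt ≤ C p log p ‖f‖₂²`. -/
theorem chebLagrange_L2_bound :
    ∃ C : ℝ, 0 < C ∧
      ∀ (p : ℕ), 2 ≤ p → ∀ f : Fin p → ℝ,
        (∫ t in (-1 : ℝ)..1, (∑ β, f β * chebLagrange p β t) ^ 2) ≤
          C * (p : ℝ) * Real.log p * ∑ β, f β ^ 2 := by
  refine ⟨2 * Real.pi / Real.log 2, by positivity, ?_⟩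
  intro p hp f
  have hp0 : 0 < p := by omega
  have hp' : (0:ℝ) < p := by exact_mod_cast hp0
  have hF : (0:ℝ) ≤ ∑ β, f β ^ 2 := Finset.sum_nonneg fun _ _ => sq_nonneg _
  have hcontL : ∀ β : Fin p, Continuous fun t => (chebLagrange p β t)^2 :=
    fun β => (chebLagrange_continuous p β).pow 2
  have hcontS : Continuous fun t => (∑ β, f β ^ 2) * ∑ β, (chebLagrange p β t)^2 :=
    continuous_const.mul (continuous_finset_sum _ fun β _ => hcontL β)
  have hcontT : Continuous fun t => (∑ β, f β * chebLagrange p β t)^2 :=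
    (continuous_finset_sum _ fun β _ => continuous_const.mul (chebLagrange_continuous p β)).pow 2
  have step1 : (∫ t in (-1 : ℝ)..1, (∑ β, f β * chebLagrange p β t) ^ 2)
      ≤ ∫ t in (-1 : ℝ)..1, (∑ β, f β ^ 2) * ∑ β, (chebLagrange p β t)^2 := by
    apply intervalIntegral.integral_mono_on (by norm_num)
    · exact hcontT.intervalIntegrable _ _
    · exact hcontS.intervalIntegrable _ _
    · intro x _
      exact Finset.sum_mul_sq_le_sq_mul_sq Finset.univ f (fun β => chebLagrange p β x)
  have step2 : (∫ t in (-1 : ℝ)..1, (∑ β, f β ^ 2) * ∑ β, (chebLagrange p β t)^2)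
      = (∑ β, f β ^ 2) * ∑ β, ∫ t in (-1 : ℝ)..1, (chebLagrange p β t)^2 := by
    rw [intervalIntegral.integral_const_mul]
    congr 1
    exact intervalIntegral.integral_finset_sum
      (fun β _ => (hcontL β).intervalIntegrable _ _)
  have step3 : (∑ β, ∫ t in (-1 : ℝ)..1, (chebLagrange p β t)^2) ≤ (p:ℝ) * (2 * Real.pi) := by
    calc (∑ β, ∫ t in (-1 : ℝ)..1, (chebLagrange p β t)^2)
        ≤ ∑ _β : Fin p, 2 * Real.pi :=
          Finset.sum_le_sum fun β _ => L_int_bound p hp0 β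
      _ = (p:ℝ) * (2 * Real.pi) := by
          rw [Finset.sum_const, Finset.card_univ, Fintype.card_fin, nsmul_eq_mul]
  have hlog : Real.log 2 ≤ Real.log p := by
    apply Real.log_le_log (by norm_num)
    exact_mod_cast hp
  have hlog2 : (0:ℝ) < Real.log 2 := Real.log_pos (by norm_num)
  have step4 : (p:ℝ) * (2 * Real.pi) ≤ 2 * Real.pi / Real.log 2 * (p:ℝ) * Real.log p := by
    rw [div_mul_eq_mul_div, div_mul_eq_mul_div, le_div_iff₀ hlog2]
    have := Real.pi_pos
    nlinarith [mul_le_mul_of_nonneg_left hlog (by positivity : (0:ℝ) ≤ 2*Real.pi*(p:ℝ))]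
  calc (∫ t in (-1 : ℝ)..1, (∑ β, f β * chebLagrange p β t) ^ 2)
      ≤ (∑ β, f β ^ 2) * ∑ β, ∫ t in (-1 : ℝ)..1, (chebLagrange p β t)^2 := step1.trans (le_of_eq step2)
    _ ≤ (∑ β, f β ^ 2) * ((p:ℝ) * (2 * Real.pi)) := mul_le_mul_of_nonneg_left step3 hF
    _ ≤ (∑ β, f β ^ 2) * (2 * Real.pi / Real.log 2 * (p:ℝ) * Real.log p) :=
        mul_le_mul_of_nonneg_left step4 hF
    _ = 2 * Real.pi / Real.log 2 * (p:ℝ) * Real.log p * ∑ β, f β ^ 2 := by ring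
end
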